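/- For every dimension d ≥ 1 and every exponent 0 < α < d there is a constant C = C(d) > 0 such that for every n ≥ 1, every family of points v_1, …, v_n ∈ [0,1]^d, and every minimal spanning tree T over v_1, …, v_n, one has Σ_{{i,j} ∈ E(T)} ‖v_i − v_j‖^α ≤ C^α · n^{1 − α/d}. -/

import Mathlib

/-- The `α`-energy of a graph `T` on vertex set `Fin n`, with vertex `i` placed at
`v i` in the metric space `X`: the sum over the edges `{i,j}` of `T` of
`dist (v i) (v j) ^ α`. -/
noncomputable def energy {X : Type*} [MetricSpace X] {n : ℕ} (v : Fin n → X)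
    (T : SimpleGraph (Fin n)) (α : ℝ) : ℝ :=
  ∑ e ∈ T.edgeSet.toFinite.toFinset,
    Sym2.lift ⟨fun i j => dist (v i) (v j) ^ α, fun i j => by simp only [dist_comm]⟩ e

/-- `T` is a minimal spanning tree over the points `v 0, …, v (n-1)`: it is a tree on
the vertex set `Fin n` minimizing the total edge length `E₁` among all such trees. -/
def IsMST {X : Type*} [MetricSpace X] {n : ℕ} (v : Fin n → X)
    (T : SimpleGraph (Fin n)) : Prop :=
  T.IsTree ∧ ∀ T' : SimpleGraph (Fin n), T'.IsTree → energy v T 1 ≤ energy v T' 1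

section Aux

open SimpleGraph

variable {V : Type*}

private lemma reach_step {T : SimpleGraph V} {a b u c : V} (h : T.Adj u c)
    (hu : (T.deleteEdges {s(a,b)}).Reachable a u ∨ (T.deleteEdges {s(a,b)}).Reachable b u) :
    (T.deleteEdges {s(a,b)}).Reachable a c ∨ (T.deleteEdges {s(a,b)}).Reachable b c := by
  by_cases he : s(u,c) = s(a,b)
  · rw [Sym2.eq_iff] at he
    rcases he with ⟨rfl, rfl⟩ | ⟨rfl, rfl⟩
    · right; exact Reachable.refl _
    · left; exact Reachable.refl _
  · have hadj : (T.deleteEdges {s(a,b)}).Adj u c := by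
      rw [deleteEdges_adj]; exact ⟨h, by simpa using he⟩
    exact hu.imp (fun hr => hr.trans hadj.reachable) (fun hr => hr.trans hadj.reachable)

private lemma reach_walk {T : SimpleGraph V} {a b : V} :
    ∀ {u x : V}, T.Walk u x →
      ((T.deleteEdges {s(a,b)}).Reachable a u ∨ (T.deleteEdges {s(a,b)}).Reachable b u) →
      ((T.deleteEdges {s(a,b)}).Reachable a x ∨ (T.deleteEdges {s(a,b)}).Reachable b x)
  | _, _, SimpleGraph.Walk.nil, h => h
  | _, _, SimpleGraph.Walk.cons h w, hu => reach_walk w (reach_step h hu)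

lemma reach_or {T : SimpleGraph V} (hT : T.Connected) (a b x : V) :
    (T.deleteEdges {s(a,b)}).Reachable a x ∨ (T.deleteEdges {s(a,b)}).Reachable b x := by
  obtain ⟨w⟩ := hT a x
  exact reach_walk w (Or.inl (Reachable.refl _))

lemma tree_not_reach {T : SimpleGraph V} (hT : T.IsTree) {a b : V} (hab : T.Adj a b) :
    ¬ (T.deleteEdges {s(a,b)}).Reachable a b := by
  have h := (isAcyclic_iff_forall_adj_isBridge.mp hT.IsAcyclic) hab
  exact isBridge_iff.mp h

lemma tree_not_reach' {T : SimpleGraph V} (hT : T.IsTree) {a b : V} (hab : T.Adj a b) :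
    ¬ (T.deleteEdges {s(a,b)}).Reachable a b := by
  have h := (isAcyclic_iff_forall_adj_isBridge.mp hT.IsAcyclic) hab
  exact isBridge_iff.mp h

lemma swap_isTree {T : SimpleGraph V} (hT : T.IsTree) {a b a' b' : V} (hab : T.Adj a b)
    (ha' : (T.deleteEdges {s(a,b)}).Reachable a a')
    (hb' : (T.deleteEdges {s(a,b)}).Reachable b b')
    (hnew : s(a',b') ∉ T.edgeSet)
    (hor : ∀ x, (T.deleteEdges {s(a,b)}).Reachable a x ∨ (T.deleteEdges {s(a,b)}).Reachable b x) :
    ((T.deleteEdges {s(a,b)}) ⊔ fromEdgeSet {s(a',b')}).IsTree := by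
  set G := T.deleteEdges {s(a,b)} with hG
  have hnr : ¬ G.Reachable a b := tree_not_reach' hT hab
  have hne : a' ≠ b' := by
    rintro rfl
    exact hnr (ha'.trans hb'.symm)
  have hnr' : ¬ G.Reachable a' b' := fun h => hnr (ha'.trans (h.trans hb'.symm))
  set T' := G ⊔ fromEdgeSet {s(a',b')} with hT'
  have hGle : G ≤ T' := le_sup_left
  have hadj' : T'.Adj a' b' := by
    refine Or.inr ?_
    rw [fromEdgeSet_adj]
    exact ⟨rfl, hne⟩
  constructor
  · -- connected
    have hreach : ∀ x, T'.Reachable x a' := by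
      intro x
      rcases hor x with hx | hx
      · exact ((hx.symm.trans ha').mono hGle)
      · exact ((hx.symm.trans hb').mono hGle).trans hadj'.symm.reachable
    have : Nonempty V := ⟨a⟩
    exact ⟨fun x y => (hreach x).trans (hreach y).symm⟩
  · -- acyclic
    intro u c hc
    by_cases he' : s(a',b') ∈ c.edges
    · have h2 := adj_and_reachable_delete_edges_iff_exists_cycle.mpr ⟨u, c, hc, he'⟩
      refine hnr' (h2.2.mono ?_)
      intro x y hxy
      rcases hxy.1 with h | h
      · exact h
      · exfalso
        rw [fromEdgeSet_adj] at h
        exact hxy.2 (by rw [fromEdgeSet_adj]; exact h)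
    · have hedges : ∀ e ∈ c.edges, e ∈ T.edgeSet := by
        intro e he
        have := c.edges_subset_edgeSet he
        rw [hT', edgeSet_sup, edgeSet_fromEdgeSet] at this
        rcases this with h | h
        · rw [hG, edgeSet_deleteEdges] at h
          exact h.1
        · exfalso
          rcases h with ⟨h1, _⟩
          rw [Set.mem_singleton_iff] at h1
          exact he' (h1 ▸ he)
      exact hT.IsAcyclic (c.transfer T hedges) (hc.transfer hedges)

lemma cut_lemma {X : Type*} [MetricSpace X] {n : ℕ} {v : Fin n → X} {T : SimpleGraph (Fin n)}
    (hT : IsMST v T) {a b a' b' : Fin n} (hab : T.Adj a b)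
    (ha' : (T.deleteEdges {s(a,b)}).Reachable a a')
    (hb' : (T.deleteEdges {s(a,b)}).Reachable b b') :
    dist (v a) (v b) ≤ dist (v a') (v b') := by
  classical
  set G := T.deleteEdges {s(a,b)} with hG
  have hnr : ¬ G.Reachable a b := tree_not_reach' hT.1 hab
  by_cases h1 : s(a',b') = s(a,b)
  · rw [Sym2.eq_iff] at h1
    rcases h1 with ⟨rfl, rfl⟩ | ⟨rfl, rfl⟩
    · exact le_refl _
    · exact (dist_comm (v b') (v a')).le
  · by_cases h2 : s(a',b') ∈ T.edgeSet
    · exfalso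
      have hadj : G.Adj a' b' := by
        rw [hG, deleteEdges_adj]
        exact ⟨T.mem_edgeSet.mp h2, by simpa using h1⟩
      exact hnr (ha'.trans (hadj.reachable.trans hb'.symm))
    · -- main case
      have hne : a' ≠ b' := by
        rintro rfl
        exact hnr (ha'.trans hb'.symm)
      set T' := G ⊔ fromEdgeSet {s(a',b')} with hT'
      have htree' : T'.IsTree :=
        swap_isTree hT.1 hab ha' hb' h2 (reach_or hT.1.isConnected a b)
      have hmin := hT.2 T' htree'
      set f : Sym2 (Fin n) → ℝ :=
        Sym2.lift ⟨fun i j => dist (v i) (v j) ^ (1:ℝ), fun i j => by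
          simp only [_root_.dist_comm]⟩
        with hf
      have hset : T'.edgeSet = (T.edgeSet \ {s(a,b)}) ∪ {s(a',b')} := by
        rw [hT', edgeSet_sup, hG, edgeSet_deleteEdges, edgeSet_fromEdgeSet]
        congr 1
        ext e
        simp only [Set.mem_diff, Set.mem_singleton_iff, Set.mem_setOf_eq,
          and_iff_left_iff_imp]
        rintro rfl
        simpa using hne
      have hEfin : T'.edgeSet.toFinite.toFinset
          = insert s(a',b') ((T.edgeSet.toFinite.toFinset).erase s(a,b)) := by
        ext e
        simp only [Set.Finite.mem_toFinset, hset, Set.mem_union, Set.mem_diff,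
          Set.mem_singleton_iff, Finset.mem_insert, Finset.mem_erase]
        tauto
      have hmem : s(a,b) ∈ T.edgeSet.toFinite.toFinset := by
        rw [Set.Finite.mem_toFinset]; exact hab
      have hnotmem : s(a',b') ∉ (T.edgeSet.toFinite.toFinset).erase s(a,b) := by
        intro h
        exact h2 (Set.Finite.mem_toFinset _ |>.mp (Finset.mem_of_mem_erase h))
      have hE' : energy v T' 1 = f s(a',b') + ∑ e ∈ (T.edgeSet.toFinite.toFinset).erase s(a,b), f e := by
        rw [energy, hEfin, Finset.sum_insert hnotmem]
      have hE : energy v T 1 = f s(a,b) + ∑ e ∈ (T.edgeSet.toFinite.toFinset).erase s(a,b), f e := by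
        rw [energy, ← Finset.add_sum_erase _ f hmem]
      have hfle : f s(a,b) ≤ f s(a',b') := by
        rw [hE, hE'] at hmin
        linarith
      have h3 : ∀ x y : Fin n, f s(x,y) = dist (v x) (v y) := by
        intro x y
        simp [hf, Real.rpow_one]
      rwa [h3, h3] at hfle

lemma coord_le_dist {d : ℕ} (x y : EuclideanSpace ℝ (Fin d)) (i : Fin d) :
    |x i - y i| ≤ dist x y := by
  rw [EuclideanSpace.dist_eq, ← Real.sqrt_sq_eq_abs]
  apply Real.sqrt_le_sqrt
  have := Finset.single_le_sum (f := fun j => dist (x j) (y j) ^ 2)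
    (fun j _ => sq_nonneg _) (Finset.mem_univ i)
  simpa [Real.dist_eq, sq_abs] using this

lemma dist_le_of_coords {d : ℕ} (x y : EuclideanSpace ℝ (Fin d)) {r : ℝ} (hr : 0 ≤ r)
    (h : ∀ i, |x i - y i| ≤ r) : dist x y ≤ r * Real.sqrt d := by
  rw [EuclideanSpace.dist_eq]
  have h1 : ∑ i, dist (x i) (y i) ^ 2 ≤ (d : ℝ) * r ^ 2 := by
    have h2 : ∀ i ∈ Finset.univ, dist (x i) (y i) ^ 2 ≤ r ^ 2 := by
      intro i _
      rw [Real.dist_eq]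
      have h0 := abs_nonneg (x i - y i)
      nlinarith [h i]
    calc ∑ i, dist (x i) (y i) ^ 2 ≤ ∑ _i : Fin d, r ^ 2 := Finset.sum_le_sum h2
      _ = (d : ℝ) * r ^ 2 := by simp [mul_comm]
  calc Real.sqrt (∑ i, dist (x i) (y i) ^ 2) ≤ Real.sqrt ((d:ℝ) * r ^ 2) :=
        Real.sqrt_le_sqrt h1
    _ = r * Real.sqrt d := by
        rw [Real.sqrt_mul (Nat.cast_nonneg d), Real.sqrt_sq hr, mul_comm]

lemma dist_midpoint_half {d : ℕ} (x y : EuclideanSpace ℝ (Fin d)) :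
    dist x (midpoint ℝ x y) = dist x y / 2 := by
  rw [dist_left_midpoint]
  norm_num
  ring

lemma midpoint_coord {d : ℕ} (x y : EuclideanSpace ℝ (Fin d)) (i : Fin d) :
    (midpoint ℝ x y) i = (x i + y i) / 2 := by
  rw [midpoint_eq_smul_add]
  simp [PiLp.smul_apply, PiLp.add_apply]
  ring

lemma mst_far {X : Type*} [MetricSpace X] {n : ℕ} {v : Fin n → X} {T : SimpleGraph (Fin n)}
    (hT : IsMST v T) {a b c d : Fin n} (hab : T.Adj a b) (hcd : T.Adj c d)
    (hne : s(a,b) ≠ s(c,d)) :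
    (dist (v a) (v b) ≤ dist (v a) (v c) ∧ dist (v a) (v b) ≤ dist (v a) (v d)) ∨
    (dist (v a) (v b) ≤ dist (v b) (v c) ∧ dist (v a) (v b) ≤ dist (v b) (v d)) := by
  have hGcd : (T.deleteEdges {s(a,b)}).Adj c d := by
    rw [SimpleGraph.deleteEdges_adj]
    refine ⟨hcd, ?_⟩
    simpa using hne.symm
  rcases reach_or hT.1.isConnected a b c with hc | hc
  · right
    have hd2 : (T.deleteEdges {s(a,b)}).Reachable a d := hc.trans hGcd.reachable
    constructor
    · have := cut_lemma hT hab hc (SimpleGraph.Reachable.refl b)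
      rwa [_root_.dist_comm (v c) (v b)] at this
    · have := cut_lemma hT hab hd2 (SimpleGraph.Reachable.refl b)
      rwa [_root_.dist_comm (v d) (v b)] at this
  · left
    have hd2 : (T.deleteEdges {s(a,b)}).Reachable b d := hc.trans hGcd.reachable
    exact ⟨cut_lemma hT hab (SimpleGraph.Reachable.refl a) hc,
      cut_lemma hT hab (SimpleGraph.Reachable.refl a) hd2⟩


noncomputable def elen {d n : ℕ} (v : Fin n → EuclideanSpace ℝ (Fin d)) :
    Sym2 (Fin n) → ℝ :=
  Sym2.lift ⟨fun i j => dist (v i) (v j), fun i j => dist_comm _ _⟩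

noncomputable def emid {d n : ℕ} (v : Fin n → EuclideanSpace ℝ (Fin d)) :
    Sym2 (Fin n) → EuclideanSpace ℝ (Fin d) :=
  Sym2.lift ⟨fun i j => midpoint ℝ (v i) (v j), fun i j => midpoint_comm _ _⟩

@[simp] lemma elen_mk {d n : ℕ} (v : Fin n → EuclideanSpace ℝ (Fin d)) (a b : Fin n) :
    elen v s(a,b) = dist (v a) (v b) := rfl

@[simp] lemma emid_mk {d n : ℕ} (v : Fin n → EuclideanSpace ℝ (Fin d)) (a b : Fin n) :
    emid v s(a,b) = midpoint ℝ (v a) (v b) := rfl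

lemma sym2_rep {α : Type*} (e : Sym2 α) : ∃ a b, e = s(a,b) :=
  Sym2.ind (fun a b => ⟨a, b, rfl⟩) e

def Kd (d : ℕ) : ℕ := ((10*d)^d + 1)^2

lemma mult_bound {d : ℕ} (hd : 1 ≤ d) {n : ℕ} {v : Fin n → EuclideanSpace ℝ (Fin d)}
    {T : SimpleGraph (Fin n)} (hT : IsMST v T) (y : EuclideanSpace ℝ (Fin d))
    (F : Finset (Sym2 (Fin n)))
    (hF : ∀ e ∈ F, e ∈ T.edgeSet ∧ dist y (emid v e) < elen v e / 8) :
    F.card ≤ Kd d := by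
  classical
  rcases F.eq_empty_or_nonempty with rfl | hne
  · simp [Kd]
  set s₀ := F.inf' hne (elen v) with hs₀
  have hs₀le : ∀ e ∈ F, s₀ ≤ elen v e := fun e he => Finset.inf'_le _ he
  obtain ⟨e₀, he₀, hs₀eq⟩ := Finset.exists_mem_eq_inf' hne (elen v)
  rw [← hs₀] at hs₀eq
  have hs₀pos : 0 < s₀ := by
    have h1 := (hF e₀ he₀).2
    have h2 := dist_nonneg (x := y) (y := emid v e₀)
    rw [hs₀eq]; linarith
  -- endpoints are close to y
  have hpt : ∀ e ∈ F, ∀ a b : Fin n, e = s(a,b) → dist (v a) y ≤ 5/8 * elen v e := by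
    intro e he a b heq
    have h1 := (hF e he).2
    have h2 : dist (v a) (emid v e) = elen v e / 2 := by
      rw [heq, emid_mk, elen_mk, dist_midpoint_half]
    calc dist (v a) y ≤ dist (v a) (emid v e) + dist (emid v e) y := dist_triangle _ _ _
      _ ≤ 5/8 * elen v e := by rw [h2, dist_comm (emid v e) y]; linarith
  -- ratio bound
  have hratio : ∀ e ∈ F, ∀ f ∈ F, elen v f ≤ 5/3 * elen v e := by
    intro e he f hf
    by_cases hef : f = e
    · subst hef
      have := hs₀le f hf
      linarith
    · obtain ⟨a, b, rfl⟩ := sym2_rep e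
      obtain ⟨c, d', rfl⟩ := sym2_rep f
      have hab : T.Adj a b := (SimpleGraph.mem_edgeSet T).mp (hF _ he).1
      have hcd : T.Adj c d' := (SimpleGraph.mem_edgeSet T).mp (hF _ hf).1
      have hya := hpt _ he a b rfl
      have hyb : dist (v b) y ≤ 5/8 * elen v s(a,b) := by
        apply hpt _ he b a
        rw [Sym2.eq_swap]
      have hyc := hpt _ hf c d' rfl
      have hyd : dist (v d') y ≤ 5/8 * elen v s(c,d') := by
        apply hpt _ hf d' c
        rw [Sym2.eq_swap]
      have hfar := mst_far hT hcd hab hef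
      simp only [elen_mk] at *
      rcases hfar with ⟨h1, _⟩ | ⟨h1, _⟩
      · have := dist_triangle (v c) y (v a)
        rw [dist_comm y (v a)] at this
        linarith
      · have := dist_triangle (v d') y (v a)
        rw [dist_comm y (v a)] at this
        linarith
  have hlen_le : ∀ e ∈ F, elen v e ≤ 5/3 * s₀ := by
    intro e he
    rw [hs₀eq]
    exact hratio e₀ he₀ e he
  have hpt2 : ∀ e ∈ F, ∀ a b : Fin n, e = s(a,b) → dist (v a) y ≤ 2 * s₀ := by
    intro e he a b heq
    have h1 := hpt e he a b heq
    have h2 := hlen_le e he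
    linarith
  -- cells
  have hsd : (0:ℝ) < Real.sqrt d := Real.sqrt_pos.mpr (by exact_mod_cast Nat.pos_of_ne_zero (by omega))
  set δ := s₀ / (2 * Real.sqrt d) with hδ
  have hδpos : 0 < δ := by positivity
  set cell : EuclideanSpace ℝ (Fin d) → (Fin d → ℤ) := fun x i => ⌊x i / δ⌋ with hcell
  have hcell_dist : ∀ x z : EuclideanSpace ℝ (Fin d), cell x = cell z → dist x z ≤ s₀ / 2 := by
    intro x z h
    have hco : ∀ i, |x i - z i| ≤ δ := by
      intro i
      have h1 : ⌊x i / δ⌋ = ⌊z i / δ⌋ := congrFun h i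
      have h2 : x i / δ < ⌊x i / δ⌋ + 1 := Int.lt_floor_add_one _
      have h3 : (⌊x i / δ⌋ : ℝ) ≤ x i / δ := Int.floor_le _
      have h4 : z i / δ < ⌊z i / δ⌋ + 1 := Int.lt_floor_add_one _
      have h5 : (⌊z i / δ⌋ : ℝ) ≤ z i / δ := Int.floor_le _
      rw [h1] at h2 h3
      have hsub1 : (x i - z i)/δ < 1 := by rw [sub_div]; linarith
      have hsub2 : (-1 : ℝ) < (x i - z i)/δ := by rw [sub_div]; linarith
      have h6 : x i - z i < δ := (div_lt_one hδpos).mp hsub1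
      have h7 : (-1) * δ < x i - z i := (lt_div_iff₀ hδpos).mp hsub2
      rw [abs_le]
      constructor <;> linarith
    calc dist x z ≤ δ * Real.sqrt d := dist_le_of_coords x z (le_of_lt hδpos) hco
      _ = s₀ / 2 := by
        rw [hδ]
        field_simp
  -- the map to cell pairs
  set Φ : Sym2 (Fin n) → Sym2 (Fin d → ℤ) := Sym2.map (fun p => cell (v p)) with hΦdef
  have hinj : Set.InjOn Φ F := by
    intro e he f hf hΦ
    by_contra hef
    obtain ⟨a, b, rfl⟩ := sym2_rep e
    obtain ⟨c, d', rfl⟩ := sym2_rep f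
    have hab : T.Adj a b := (SimpleGraph.mem_edgeSet T).mp (hF _ he).1
    have hcd : T.Adj c d' := (SimpleGraph.mem_edgeSet T).mp (hF _ hf).1
    have hfar := mst_far hT hab hcd hef
    rw [hΦdef] at hΦ
    simp only [Sym2.map_pair_eq, Sym2.eq_iff] at hΦ
    have hs : s₀ ≤ elen v s(a,b) := hs₀le _ he
    simp only [elen_mk] at hs
    rcases hΦ with ⟨h1, h2⟩ | ⟨h1, h2⟩
    · have d1 := hcell_dist _ _ h1
      have d2 := hcell_dist _ _ h2
      rcases hfar with ⟨f1, _⟩ | ⟨_, f2⟩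
      · linarith
      · linarith
    · have d1 := hcell_dist _ _ h1
      have d2 := hcell_dist _ _ h2
      rcases hfar with ⟨_, f2⟩ | ⟨f1, _⟩
      · linarith
      · linarith
  -- image lands in S.sym2
  set lo : Fin d → ℤ := fun i => ⌊(y i - 2*s₀)/δ⌋ with hlo
  set hi : Fin d → ℤ := fun i => ⌊(y i + 2*s₀)/δ⌋ with hhi
  set S : Finset (Fin d → ℤ) := Finset.Icc lo hi with hS
  have hcoord : ∀ e ∈ F, ∀ a b : Fin n, e = s(a,b) → ∀ i, |v a i - y i| ≤ 2 * s₀ :=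
    fun e he a b heq i => (coord_le_dist (v a) y i).trans (hpt2 e he a b heq)
  have hmemS : ∀ e ∈ F, ∀ a b : Fin n, e = s(a,b) → cell (v a) ∈ S := by
    intro e he a b heq
    have h := hcoord e he a b heq
    rw [hS, Finset.mem_Icc]
    constructor
    · rw [Pi.le_def]
      intro i
      apply Int.floor_le_floor
      have h9 := abs_le.mp (h i)
      have h2 : y i - 2*s₀ ≤ v a i := by linarith [h9.1]
      gcongr
    · rw [Pi.le_def]
      intro i
      apply Int.floor_le_floor
      have h9 := abs_le.mp (h i)
      have h2 : v a i ≤ y i + 2*s₀ := by linarith [h9.2]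
      gcongr
  have hmemS2 : ∀ e ∈ F, Φ e ∈ S.sym2 := by
    intro e he
    obtain ⟨a, b, rfl⟩ := sym2_rep e
    rw [hΦdef]
    simp only [Sym2.map_pair_eq]
    rw [Finset.mk_mem_sym2_iff]
    exact ⟨hmemS _ he a b rfl, hmemS _ he b a (Sym2.eq_swap)⟩
  have hcard1 : F.card ≤ S.sym2.card := by
    rw [← Finset.card_image_of_injOn hinj]
    apply Finset.card_le_card
    intro x hx
    obtain ⟨e, he, rfl⟩ := Finset.mem_image.mp hx
    exact hmemS2 e he
  have key : ∀ i : Fin d, (Finset.Icc (lo i) (hi i)).card ≤ 10*d := by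
    intro i
    rw [Int.card_Icc]
    have h8 : Real.sqrt d ≤ d := by
      have : ((d:ℝ)) = Real.sqrt ((d:ℝ)^2) := (Real.sqrt_sq (Nat.cast_nonneg d)).symm
      rw [this]
      apply Real.sqrt_le_sqrt
      have hd1 : (1:ℝ) ≤ (d:ℝ) := by exact_mod_cast hd
      nlinarith
    have hfl1 : (hi i : ℝ) ≤ (y i + 2*s₀)/δ := Int.floor_le _
    have hfl2 : (y i - 2*s₀)/δ - 1 < lo i := Int.sub_one_lt_floor _
    have hδd : s₀/δ = 2 * Real.sqrt d := by
      rw [hδ]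
      field_simp
    have hreal : ((hi i + 1 - lo i : ℤ) : ℝ) ≤ 10*(d:ℝ) := by
      push_cast
      have hdiff : (y i + 2*s₀)/δ - (y i - 2*s₀)/δ = 4 * (s₀/δ) := by
        field_simp
        ring
      rw [hδd] at hdiff
      have hd1 : (1:ℝ) ≤ (d:ℝ) := by exact_mod_cast hd
      nlinarith
    have hint : hi i + 1 - lo i ≤ ((10*d : ℕ) : ℤ) := by exact_mod_cast hreal
    calc (hi i + 1 - lo i).toNat ≤ ((10*d : ℕ) : ℤ).toNat := Int.toNat_le_toNat hint
      _ = 10*d := Int.toNat_natCast _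
  have hScard : S.card ≤ (10*d)^d := by
    rw [hS, Pi.card_Icc]
    calc ∏ i, (Finset.Icc (lo i) (hi i)).card ≤ ∏ _i : Fin d, 10*d :=
          Finset.prod_le_prod' (fun i _ => key i)
      _ = (10*d)^d := by
          rw [Finset.prod_const, Finset.card_univ, Fintype.card_fin]
  have h2 : S.sym2.card ≤ Kd d := by
    rw [Finset.card_sym2, Nat.choose_two_right]
    have hm : S.card + 1 ≤ (10*d)^d + 1 := by omega
    calc (S.card + 1) * (S.card + 1 - 1) / 2 ≤ (S.card + 1) * (S.card + 1) := by
          have := Nat.div_le_self ((S.card + 1) * (S.card + 1 - 1)) 2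
          have h3 : (S.card + 1) * (S.card + 1 - 1) ≤ (S.card + 1) * (S.card + 1) :=
            Nat.mul_le_mul_left _ (by omega)
          omega
      _ ≤ ((10*d)^d + 1) * ((10*d)^d + 1) := Nat.mul_le_mul hm hm
      _ = Kd d := by rw [Kd, pow_two]
  exact hcard1.trans h2

open scoped Classical in
open MeasureTheory ENNReal in
lemma vol_sum {d : ℕ} {ι : Type*} (F : Finset ι) (x : ι → EuclideanSpace ℝ (Fin d))
    (r : ι → ℝ) (z : EuclideanSpace ℝ (Fin d)) (R : ℝ) (K : ℕ)
    (hsub : ∀ i ∈ F, Metric.ball (x i) (r i) ⊆ Metric.ball z R)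
    (hmult : ∀ y, (F.filter (fun i => y ∈ Metric.ball (x i) (r i))).card ≤ K) :
    ∑ i ∈ F, volume (Metric.ball (x i) (r i)) ≤ K * volume (Metric.ball z R) := by
  classical
  have h1 : ∀ i ∈ F, volume (Metric.ball (x i) (r i))
      = ∫⁻ y, (Metric.ball (x i) (r i)).indicator (fun _ => (1:ENNReal)) y := by
    intro i _
    rw [lintegral_indicator measurableSet_ball, setLIntegral_const, one_mul]
  have hpt : ∀ y, ∑ i ∈ F, (Metric.ball (x i) (r i)).indicator (fun _ => (1:ENNReal)) y
      ≤ (Metric.ball z R).indicator (fun _ => (K:ENNReal)) y := by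
    intro y
    by_cases hy : y ∈ Metric.ball z R
    · rw [Set.indicator_of_mem hy]
      have h2 : ∀ i ∈ F, (Metric.ball (x i) (r i)).indicator (fun _ => (1:ENNReal)) y
          = if y ∈ Metric.ball (x i) (r i) then 1 else 0 :=
        fun i _ => Set.indicator_apply _ _ _
      rw [Finset.sum_congr rfl h2, ← Finset.sum_filter, Finset.sum_const, nsmul_eq_mul, mul_one]
      exact_mod_cast Nat.cast_le.mpr (hmult y)
    · rw [Set.indicator_of_notMem hy]
      have h3 : ∀ i ∈ F, (Metric.ball (x i) (r i)).indicator (fun _ => (1:ENNReal)) y = 0 := by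
        intro i hi
        exact Set.indicator_of_notMem (fun hmem => hy (hsub i hi hmem)) _
      rw [Finset.sum_congr rfl h3, Finset.sum_const, smul_zero]
  calc ∑ i ∈ F, volume (Metric.ball (x i) (r i))
      = ∑ i ∈ F, ∫⁻ y, (Metric.ball (x i) (r i)).indicator (fun _ => (1:ENNReal)) y :=
        Finset.sum_congr rfl h1
    _ = ∫⁻ y, ∑ i ∈ F, (Metric.ball (x i) (r i)).indicator (fun _ => (1:ENNReal)) y :=
        (lintegral_finset_sum F (fun i _ => measurable_const.indicator measurableSet_ball)).symm
    _ ≤ ∫⁻ y, (Metric.ball z R).indicator (fun _ => (K:ENNReal)) y := lintegral_mono hpt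
    _ = K * volume (Metric.ball z R) := by
        rw [lintegral_indicator measurableSet_ball, setLIntegral_const]

open scoped Classical in
open MeasureTheory ENNReal in
lemma sum_pow_d_bound {d : ℕ} (hd : 1 ≤ d) {n : ℕ} {v : Fin n → EuclideanSpace ℝ (Fin d)}
    (hv : ∀ j i, v j i ∈ Set.Icc (0:ℝ) 1) {T : SimpleGraph (Fin n)} (hT : IsMST v T) :
    ∑ e ∈ T.edgeSet.toFinite.toFinset, (elen v e)^d ≤ (Kd d : ℝ) * (16 * Real.sqrt d)^d := by
  haveI : Nonempty (Fin d) := ⟨⟨0, by omega⟩⟩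
  have hsd : (0:ℝ) < Real.sqrt d := Real.sqrt_pos.mpr (by
    exact_mod_cast Nat.pos_of_ne_zero (by omega))
  set F := T.edgeSet.toFinite.toFinset with hF
  set z : EuclideanSpace ℝ (Fin d) := (EuclideanSpace.equiv (Fin d) ℝ).symm (fun _ => 1/2) with hz
  have hzi : ∀ i, z i = 1/2 := fun i => rfl
  -- edge lengths at most √d
  have hlen : ∀ e ∈ F, 0 ≤ elen v e ∧ elen v e ≤ Real.sqrt d := by
    intro e he
    obtain ⟨a, b, rfl⟩ := sym2_rep e
    rw [elen_mk]
    refine ⟨dist_nonneg, ?_⟩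
    have := dist_le_of_coords (v a) (v b) (r := 1) zero_le_one (fun i => by
      have h1 := hv a i
      have h2 := hv b i
      rw [Set.mem_Icc] at h1 h2
      rw [abs_le]
      constructor <;> linarith)
    simpa using this
  -- midpoints close to center
  have hmid : ∀ e ∈ F, dist (emid v e) z ≤ 1/2 * Real.sqrt d := by
    intro e he
    obtain ⟨a, b, rfl⟩ := sym2_rep e
    rw [emid_mk]
    apply dist_le_of_coords _ _ (by norm_num)
    intro i
    rw [midpoint_coord, hzi]
    have h1 := hv a i
    have h2 := hv b i
    rw [Set.mem_Icc] at h1 h2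
    rw [abs_le]
    constructor <;> [linarith; linarith]
  have hsub : ∀ e ∈ F, Metric.ball (emid v e) (elen v e / 8) ⊆ Metric.ball z (2 * Real.sqrt d) := by
    intro e he u hu
    rw [Metric.mem_ball] at hu ⊢
    have h1 := (hlen e he).2
    have h2 := hmid e he
    calc dist u z ≤ dist u (emid v e) + dist (emid v e) z := dist_triangle _ _ _
      _ < 2 * Real.sqrt d := by
          have := (hlen e he).1
          linarith
  have hmult : ∀ y, (F.filter (fun e => y ∈ Metric.ball (emid v e) (elen v e / 8))).card ≤ Kd d := by
    intro y
    apply mult_bound hd hT y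
    intro e he
    rw [Finset.mem_filter] at he
    refine ⟨?_, ?_⟩
    · have := he.1
      rwa [Set.Finite.mem_toFinset] at this
    · have := he.2
      rwa [Metric.mem_ball] at this
  have hvol := vol_sum F (emid v) (fun e => elen v e / 8) z (2 * Real.sqrt d) (Kd d) hsub hmult
  -- rewrite volumes
  set c : ℝ≥0∞ := ENNReal.ofReal (Real.sqrt Real.pi ^ d / Real.Gamma (d / 2 + 1)) with hc
  have hball : ∀ (x : EuclideanSpace ℝ (Fin d)) (r : ℝ),
      volume (Metric.ball x r) = (ENNReal.ofReal r) ^ d * c := by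
    intro x r
    rw [EuclideanSpace.volume_ball, Fintype.card_fin]
  rw [Finset.sum_congr rfl (fun e _ => hball (emid v e) (elen v e / 8)), hball z _] at hvol
  rw [← Finset.sum_mul] at hvol
  have hc0 : c ≠ 0 := by
    rw [hc]
    rw [ne_eq, ENNReal.ofReal_eq_zero, not_le]
    apply div_pos
    · exact pow_pos (Real.sqrt_pos.mpr Real.pi_pos) d
    · apply Real.Gamma_pos_of_pos
      positivity
  have hctop : c ≠ ⊤ := ENNReal.ofReal_ne_top
  rw [← mul_assoc] at hvol
  have hvol2 : ∑ e ∈ F, (ENNReal.ofReal (elen v e / 8)) ^ d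
      ≤ (Kd d : ℝ≥0∞) * (ENNReal.ofReal (2 * Real.sqrt d)) ^ d :=
    (ENNReal.mul_le_mul_iff_left hc0 hctop).mp hvol
  -- convert to reals
  have hL : ∑ e ∈ F, (ENNReal.ofReal (elen v e / 8)) ^ d
      = ENNReal.ofReal (∑ e ∈ F, (elen v e / 8)^d) := by
    rw [ENNReal.ofReal_sum_of_nonneg (fun e he => by have := (hlen e he).1; positivity)]
    apply Finset.sum_congr rfl
    intro e he
    rw [ENNReal.ofReal_pow]
    have := (hlen e he).1
    positivity
  have hR : (Kd d : ℝ≥0∞) * (ENNReal.ofReal (2 * Real.sqrt d)) ^ d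
      = ENNReal.ofReal ((Kd d : ℝ) * (2 * Real.sqrt d)^d) := by
    rw [← ENNReal.ofReal_pow (by positivity : (0:ℝ) ≤ 2 * Real.sqrt d),
      ← ENNReal.ofReal_natCast (Kd d),
      ← ENNReal.ofReal_mul (by positivity : (0:ℝ) ≤ ((Kd d : ℕ) : ℝ))]
  rw [hL, hR] at hvol2
  have hreal : ∑ e ∈ F, (elen v e / 8)^d ≤ (Kd d : ℝ) * (2 * Real.sqrt d)^d := by
    rw [← ENNReal.ofReal_le_ofReal_iff (by positivity)]
    exact hvol2
  have hfinal : ∑ e ∈ F, (elen v e)^d = 8^d * ∑ e ∈ F, (elen v e / 8)^d := by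
    rw [Finset.mul_sum]
    apply Finset.sum_congr rfl
    intro e he
    have h8 : ((8:ℝ))^d ≠ 0 := by positivity
    rw [div_pow, mul_comm, div_mul_cancel₀ _ h8]
  rw [hfinal]
  calc 8^d * ∑ e ∈ F, (elen v e / 8)^d ≤ 8^d * ((Kd d : ℝ) * (2 * Real.sqrt d)^d) := by
        apply mul_le_mul_of_nonneg_left hreal (by positivity)
    _ = (Kd d : ℝ) * (16 * Real.sqrt d)^d := by
        rw [mul_pow 16, show (16:ℝ)^d = 2^d*8^d by rw [← mul_pow]; norm_num, mul_pow 2]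
        ring

lemma sum_rpow_le {ι : Type*} (F : Finset ι) (y : ι → ℝ) (hy : ∀ i ∈ F, 0 ≤ y i) {θ : ℝ}
    (hθ0 : 0 < θ) (hθ1 : θ ≤ 1) :
    ∑ i ∈ F, (y i) ^ θ ≤ (F.card : ℝ) ^ (1 - θ) * (∑ i ∈ F, y i) ^ θ := by
  rcases F.eq_empty_or_nonempty with rfl | hne
  · simp only [Finset.sum_empty, Finset.card_empty, Nat.cast_zero]
    positivity
  have hm : (0:ℝ) < F.card := by
    have := Finset.card_pos.mpr hne
    exact_mod_cast this
  set m := (F.card : ℝ) with hmdef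
  have key := Real.rpow_arith_mean_le_arith_mean_rpow F (fun _ => 1/m) (fun i => y i ^ θ)
      (fun i _ => by positivity)
      (by rw [Finset.sum_const, nsmul_eq_mul]; field_simp; exact hmdef.symm)
      (fun i hi => Real.rpow_nonneg (hy i hi) θ)
      (p := 1/θ) (by rw [le_div_iff₀ hθ0]; linarith)
  beta_reduce at key
  have hinner : ∀ i ∈ F, ((y i)^θ)^((1:ℝ)/θ) = y i := by
    intro i hi
    rw [← Real.rpow_mul (hy i hi), mul_one_div, div_self hθ0.ne', Real.rpow_one]
  have hres : ∑ i ∈ F, 1/m * (y i ^ θ) ^ ((1:ℝ)/θ) = 1/m * ∑ i ∈ F, y i := by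
    rw [← Finset.mul_sum]
    congr 1
    exact Finset.sum_congr rfl hinner
  rw [hres] at key
  set s₁ := ∑ i ∈ F, (1/m) * (y i ^ θ) with hs₁
  have hs₁nn : 0 ≤ s₁ := Finset.sum_nonneg (fun i hi => mul_nonneg (by positivity) (Real.rpow_nonneg (hy i hi) _))
  have key2 : s₁ ≤ ((1/m) * ∑ i ∈ F, y i) ^ θ := by
    have h5 := Real.rpow_le_rpow (Real.rpow_nonneg hs₁nn _) key hθ0.le
    rw [← Real.rpow_mul hs₁nn, one_div_mul_cancel hθ0.ne', Real.rpow_one] at h5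
    exact h5
  have hsum_eq : ∑ i ∈ F, y i ^ θ = m * s₁ := by
    rw [hs₁, ← Finset.mul_sum, ← mul_assoc, mul_one_div, div_self hm.ne', one_mul]
  rw [hsum_eq]
  have hrhs : ((1/m) * ∑ i ∈ F, y i) ^ θ = (1/m)^θ * (∑ i ∈ F, y i)^θ :=
    Real.mul_rpow (by positivity) (Finset.sum_nonneg hy)
  have hmpow : m * (1/m)^θ = m ^ (1-θ) := by
    rw [one_div, Real.inv_rpow hm.le, Real.rpow_sub hm, Real.rpow_one]
    rw [div_eq_mul_inv]
  calc m * s₁ ≤ m * ((1/m) * ∑ i ∈ F, y i) ^ θ := by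
        apply mul_le_mul_of_nonneg_left key2 hm.le
    _ = m ^ (1-θ) * (∑ i ∈ F, y i)^θ := by
        rw [hrhs, ← mul_assoc, hmpow]

end Aux

/-- For every dimension `d ≥ 1` and every exponent `0 < α < d` there is a constant
`C = C(d) > 0` such that for all `n ≥ 1`, all points in the cube `[0,1]^d` and every
minimal spanning tree `T` over them, `E_α(T) ≤ C^α * n^(1 - α/d)`. -/
theorem mst_energy_bound_subcritical (d : ℕ) (hd : 1 ≤ d) :
    ∃ C : ℝ, 0 < C ∧ ∀ α : ℝ, 0 < α → α < (d : ℝ) → ∀ n : ℕ, 1 ≤ n →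
      ∀ v : Fin n → EuclideanSpace ℝ (Fin d), (∀ j i, v j i ∈ Set.Icc (0:ℝ) 1) →
      ∀ T : SimpleGraph (Fin n), IsMST v T →
        energy v T α ≤ C ^ α * (n : ℝ) ^ (1 - α / d) := by
  classical
  set A : ℝ := (Kd d : ℝ) * (16 * Real.sqrt d)^d with hA
  have hA0 : 0 ≤ A := by positivity
  refine ⟨A ^ (1/(d:ℝ)) + 1, by positivity, ?_⟩
  intro α hα0 hαd n hn v hv T hT
  have hdpos : (0:ℝ) < d := by
    have : 0 < d := by omega
    exact_mod_cast this
  set θ : ℝ := α / d with hθ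
  have hθ0 : 0 < θ := div_pos hα0 hdpos
  have hθ1 : θ < 1 := (div_lt_one hdpos).mpr hαd
  set F := T.edgeSet.toFinite.toFinset with hFdef
  have hnonneg : ∀ e ∈ F, 0 ≤ elen v e := by
    intro e _
    obtain ⟨a,b,rfl⟩ := sym2_rep e
    rw [elen_mk]
    exact dist_nonneg
  have he : energy v T α = ∑ e ∈ F, (elen v e) ^ α := by
    apply Finset.sum_congr rfl
    intro e _
    obtain ⟨a,b,rfl⟩ := sym2_rep e
    rw [Sym2.lift_mk, elen_mk]
  have hsum := sum_pow_d_bound hd hv hT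
  have hpow : ∀ e ∈ F, (elen v e) ^ α = ((elen v e)^d : ℝ) ^ θ := by
    intro e he'
    rw [← Real.rpow_natCast (elen v e) d, ← Real.rpow_mul (hnonneg e he')]
    congr 1
    rw [hθ]
    field_simp
  rw [he, Finset.sum_congr rfl hpow]
  have h2 := sum_rpow_le F (fun e => (elen v e)^d)
    (fun e he' => by have := hnonneg e he'; positivity) hθ0 hθ1.le
  have hcardn : (F.card : ℝ) ≤ n := by
    have h3 : F = T.edgeFinset := by
      ext e
      rw [Set.Finite.mem_toFinset, SimpleGraph.mem_edgeFinset]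
    have h4 := hT.1.card_edgeFinset
    rw [Fintype.card_fin] at h4
    rw [h3]
    exact_mod_cast Nat.le_of_lt_succ (by omega)
  have hAθ : A^θ = (A^(1/(d:ℝ)))^α := by
    rw [← Real.rpow_mul hA0]
    congr 1
    rw [hθ]
    field_simp
  calc ∑ e ∈ F, ((elen v e)^d : ℝ)^θ
      ≤ (F.card : ℝ)^(1-θ) * (∑ e ∈ F, (elen v e)^d)^θ := h2
    _ ≤ (n:ℝ)^(1-θ) * A^θ := by
        apply mul_le_mul
        · exact Real.rpow_le_rpow (by positivity) hcardn (by linarith)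
        · exact Real.rpow_le_rpow
            (Finset.sum_nonneg (fun e he' => by have := hnonneg e he'; positivity)) hsum hθ0.le
        · apply Real.rpow_nonneg
          exact Finset.sum_nonneg (fun e he' => by have := hnonneg e he'; positivity)
        · positivity
    _ ≤ (A ^ (1/(d:ℝ)) + 1)^α * (n:ℝ)^(1-θ) := by
        rw [mul_comm]
        apply mul_le_mul_of_nonneg_right ?_ (by positivity)
        rw [hAθ]
        apply Real.rpow_le_rpow (by positivity) (by linarith) hα0.le
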